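/- Let N be a positive integer, μ > 0, and define F_N(Δθ) := (2/π)·( Si((Nπ/2)(Δθ + μ)) − Si((Nπ/2)(Δθ − μ)) ). Then for every Δθ with |Δθ| < μ, the flat-top (interior) approximation error satisfies |F_N(Δθ) − 2| ≤ (8/(Nπ²))·( 1/(μ + Δθ) + 1/(μ − Δθ) ). (Rigorous version of the interior branch of the paper's Proposition 1: inside the target angular region the unconstrained beamforming-gain profile is flat with value 2 up to an O(1/N) correction.) -/

import Mathlib

open MeasureTheory Real Set


/-- Sine integral `Si(x) = ∫₀ˣ sin t / t dt`, with the integrand extended by `1` at `t = 0`. -/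
noncomputable def Si (x : ℝ) : ℝ :=
  ∫ t in (0 : ℝ)..x, if t = 0 then 1 else Real.sin t / t

lemma integral_exp_neg_mul_Ioi {b : ℝ} (hb : 0 < b) :
    ∫ s in Ioi (0:ℝ), Real.exp (-(b*s)) = 1/b := by
  have h := integral_comp_mul_left_Ioi (fun x => Real.exp (-x)) 0 hb
  simp only [mul_zero, integral_exp_neg_Ioi_zero, smul_eq_mul, mul_one] at h
  rw [h, one_div]

lemma hasDerivAt_aux (s t : ℝ) :
    HasDerivAt (fun t => -(Real.exp (-(t*s)) * (s * Real.sin t + Real.cos t)) / (1+s^2))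
      (Real.sin t * Real.exp (-(t*s))) t := by
  have hs : (1:ℝ) + s^2 ≠ 0 := by positivity
  have h1 : HasDerivAt (fun t : ℝ => -(t*s)) (-s) t := by
    simpa [Pi.neg_def] using ((hasDerivAt_id t).mul_const s).neg
  have h2 : HasDerivAt (fun t : ℝ => Real.exp (-(t*s))) (Real.exp (-(t*s)) * (-s)) t := h1.exp
  have h3 : HasDerivAt (fun t : ℝ => s * Real.sin t + Real.cos t)
      (s * Real.cos t + (-Real.sin t)) t :=
    ((Real.hasDerivAt_sin t).const_mul s).add (Real.hasDerivAt_cos t)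
  have h4 := ((h2.mul h3).neg).div_const (1+s^2)
  refine h4.congr_deriv ?_
  rw [div_eq_iff hs]
  ring

lemma Si_tail {T : ℝ} (hT : 0 < T) : |Si T - Real.pi/2| ≤ 2 / T := by
  have hs : ∀ s : ℝ, (1:ℝ) + s^2 ≠ 0 := fun s => by positivity
  -- step 1 : Si T as set integral
  have h1 : Si T = ∫ t in Ioc (0:ℝ) T, Real.sin t / t := by
    rw [Si, intervalIntegral.integral_of_le hT.le]
    refine setIntegral_congr_fun measurableSet_Ioc (fun t ht => ?_)
    rw [if_neg (ne_of_gt ht.1)]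
  -- Fubini integrability
  set F : ℝ → ℝ → ℝ := fun t s => Real.sin t * Real.exp (-(t*s)) with hF
  have hcont : Continuous (Function.uncurry F) := by
    apply Continuous.mul
    · exact Real.continuous_sin.comp continuous_fst
    · exact Real.continuous_exp.comp (continuous_fst.mul continuous_snd).neg
  set μ := volume.restrict (Ioc (0:ℝ) T)
  set ν := volume.restrict (Ioi (0:ℝ))
  have hint : Integrable (Function.uncurry F) (μ.prod ν) := by
    rw [integrable_prod_iff hcont.aestronglyMeasurable]
    constructor
    · filter_upwards [ae_restrict_mem measurableSet_Ioc] with t ht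
      have : IntegrableOn (fun s => Real.exp (-(t*s))) (Ioi (0:ℝ)) := by
        simpa [neg_mul] using exp_neg_integrableOn_Ioi 0 ht.1
      exact this.const_mul (Real.sin t)
    · have hmeas : AEStronglyMeasurable (fun t => ∫ s, ‖F t s‖ ∂ν) μ :=
        (hcont.aestronglyMeasurable.norm).integral_prod_right'
      refine Integrable.mono' (g := fun _ => (1:ℝ)) ?_ hmeas ?_
      · exact integrableOn_const (measure_Ioc_lt_top).ne
      · filter_upwards [ae_restrict_mem measurableSet_Ioc] with t ht
        show ‖∫ s, ‖F t s‖ ∂ν‖ ≤ 1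
        have hval : ∫ s, ‖F t s‖ ∂ν = |Real.sin t| * (1/t) := by
          have : ∀ s : ℝ, ‖F t s‖ = |Real.sin t| * Real.exp (-(t*s)) := by
            intro s
            simp [hF, abs_mul, abs_of_pos (Real.exp_pos _)]
          simp_rw [this]
          rw [integral_const_mul, integral_exp_neg_mul_Ioi ht.1]
        rw [hval, norm_eq_abs,
          abs_of_nonneg (mul_nonneg (abs_nonneg _) (one_div_nonneg.mpr ht.1.le))]
        calc |Real.sin t| * (1/t) ≤ |t| * (1/t) :=
              mul_le_mul_of_nonneg_right abs_sin_le_abs (one_div_nonneg.mpr ht.1.le)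
          _ = 1 := by rw [abs_of_pos ht.1, one_div, mul_inv_cancel₀ (ne_of_gt ht.1)]
  -- swap
  have hswap : ∫ t, (∫ s, F t s ∂ν) ∂μ = ∫ s, (∫ t, F t s ∂μ) ∂ν :=
    integral_integral_swap hint
  -- LHS of swap equals Si T
  have hL : ∫ t, (∫ s, F t s ∂ν) ∂μ = Si T := by
    rw [h1]
    refine setIntegral_congr_fun measurableSet_Ioc (fun t ht => ?_)
    have : ∫ s, F t s ∂ν = Real.sin t * (1/t) := by
      simp only [hF]
      rw [integral_const_mul, integral_exp_neg_mul_Ioi ht.1]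
    rw [this]; ring
  -- RHS inner integral
  have hR : ∀ s : ℝ, ∫ t, F t s ∂μ
      = (1+s^2)⁻¹ + (-(Real.exp (-(T*s)) * (s * Real.sin T + Real.cos T)) / (1+s^2)) := by
    intro s
    have hderiv := fun t => hasDerivAt_aux s t
    have : (∫ t in (0:ℝ)..T, Real.sin t * Real.exp (-(t*s)))
        = (fun t => -(Real.exp (-(t*s)) * (s * Real.sin t + Real.cos t)) / (1+s^2)) T
          - (fun t => -(Real.exp (-(t*s)) * (s * Real.sin t + Real.cos t)) / (1+s^2)) 0 := by
      refine intervalIntegral.integral_eq_sub_of_hasDerivAt (fun t _ => hderiv t) ?_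
      exact (Continuous.intervalIntegrable (by
        exact Real.continuous_sin.mul (Real.continuous_exp.comp (continuous_id.mul continuous_const).neg)) 0 T)
    have h2 : ∫ t, F t s ∂μ = ∫ t in (0:ℝ)..T, Real.sin t * Real.exp (-(t*s)) := by
      rw [intervalIntegral.integral_of_le hT.le]
    rw [h2, this]
    simp only [zero_mul, neg_zero, Real.exp_zero, Real.sin_zero, Real.cos_zero, mul_zero, one_mul]
    field_simp
    ring
  -- the remainder term
  set r : ℝ → ℝ := fun s => -(Real.exp (-(T*s)) * (s * Real.sin T + Real.cos T)) / (1+s^2) with hr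
  have hgint : IntegrableOn (fun s => 2 * Real.exp (-(T*s))) (Ioi (0:ℝ)) := by
    simpa [neg_mul, IntegrableOn] using (exp_neg_integrableOn_Ioi 0 hT).const_mul 2
  have hrbound : ∀ s : ℝ, s ∈ Ioi (0:ℝ) → |r s| ≤ 2 * Real.exp (-(T*s)) := by
    intro s hsmem
    have hs0 : (0:ℝ) < s := hsmem
    have hnum : |s * Real.sin T + Real.cos T| ≤ s + 1 := by
      calc |s * Real.sin T + Real.cos T| ≤ |s * Real.sin T| + |Real.cos T| := abs_add_le _ _
        _ ≤ s * 1 + 1 := by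
            refine add_le_add ?_ (Real.abs_cos_le_one T)
            rw [abs_mul, abs_of_pos hs0]
            exact mul_le_mul_of_nonneg_left (Real.abs_sin_le_one T) hs0.le
        _ = s + 1 := by ring
    have h2 : s + 1 ≤ 2 * (1 + s^2) := by nlinarith [sq_nonneg (2*s-1)]
    have hpos : (0:ℝ) < 1 + s^2 := by positivity
    rw [hr]
    rw [abs_div, abs_neg, abs_mul, abs_of_pos (Real.exp_pos _), abs_of_pos hpos,
      div_le_iff₀ hpos]
    calc Real.exp (-(T*s)) * |s * Real.sin T + Real.cos T|
        ≤ Real.exp (-(T*s)) * (2 * (1 + s^2)) :=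
          mul_le_mul_of_nonneg_left (hnum.trans h2) (Real.exp_pos _).le
      _ = 2 * Real.exp (-(T*s)) * (1 + s^2) := by ring
  have hrint : IntegrableOn r (Ioi (0:ℝ)) := by
    refine Integrable.mono' hgint ?_ ?_
    · refine Continuous.aestronglyMeasurable ?_
      apply Continuous.div
      · exact ((Real.continuous_exp.comp (continuous_const.mul continuous_id).neg).mul
          ((continuous_id.mul continuous_const).add continuous_const)).neg
      · exact continuous_const.add (continuous_pow 2)
      · intro s; positivity
    · filter_upwards [ae_restrict_mem measurableSet_Ioi] with s hsmem
      simpa [Real.norm_eq_abs] using hrbound s hsmem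
  have hsplit : (∫ s, (∫ t, F t s ∂μ) ∂ν)
      = (Real.pi/2 - Real.arctan 0) + ∫ s in Ioi (0:ℝ), r s := by
    have : (∫ s, (∫ t, F t s ∂μ) ∂ν) = ∫ s in Ioi (0:ℝ), ((1+s^2)⁻¹ + r s) := by
      exact integral_congr_ae (Filter.Eventually.of_forall (fun s => hR s))
    rw [this, integral_add integrable_inv_one_add_sq.integrableOn hrint,
      integral_Ioi_inv_one_add_sq]
  have hkey : Si T - Real.pi/2 = ∫ s in Ioi (0:ℝ), r s := by
    rw [← hL, hswap, hsplit, Real.arctan_zero]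
    ring
  rw [hkey]
  calc |∫ s in Ioi (0:ℝ), r s| ≤ ∫ s in Ioi (0:ℝ), 2 * Real.exp (-(T*s)) := by
        rw [← Real.norm_eq_abs]
        refine norm_integral_le_of_norm_le hgint ?_
        filter_upwards [ae_restrict_mem measurableSet_Ioi] with s hsmem
        simpa [Real.norm_eq_abs] using hrbound s hsmem
    _ = 2 / T := by
        rw [integral_const_mul, integral_exp_neg_mul_Ioi hT]
        ring

lemma Si_neg (x : ℝ) : Si (-x) = - Si x := by
  have heven : ∀ t : ℝ, (if -t = 0 then (1:ℝ) else Real.sin (-t) / (-t))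
      = (if t = 0 then 1 else Real.sin t / t) := by
    intro t
    rcases eq_or_ne t 0 with h | h
    · simp [h]
    · rw [if_neg (by simpa using h), if_neg h, Real.sin_neg, neg_div_neg_eq]
  have hcn := intervalIntegral.integral_comp_neg (a := 0) (b := x)
      (fun t => if t = 0 then (1:ℝ) else Real.sin t / t)
  simp only [heven, neg_zero] at hcn
  rw [Si, Si, hcn]
  exact intervalIntegral.integral_symm (-x) 0

/-- Rigorous version of the interior branch of the paper's Proposition 1: inside the
target angular region `|Δθ| < μ`, the (normalized) unconstrained beamforming-gain
profile `F_N(Δθ) = (2/π)(Si((Nπ/2)(Δθ+μ)) - Si((Nπ/2)(Δθ-μ)))` is flat with value `2`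
up to an `O(1/N)` correction. -/
theorem flat_top_interior_bound (N : ℕ) (hN : 0 < N) (μ : ℝ) (hμ : 0 < μ)
    (Δθ : ℝ) (h : |Δθ| < μ) :
    |(2 / Real.pi) * (Si (((N : ℝ) * Real.pi / 2) * (Δθ + μ))
        - Si (((N : ℝ) * Real.pi / 2) * (Δθ - μ))) - 2|
      ≤ (8 / ((N : ℝ) * Real.pi ^ 2)) * (1 / (μ + Δθ) + 1 / (μ - Δθ)) := by
  have hπ := Real.pi_pos
  have hN' : (0:ℝ) < (N:ℝ) := by exact_mod_cast hN
  set c : ℝ := (N : ℝ) * Real.pi / 2 with hc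
  have hcpos : 0 < c := by positivity
  obtain ⟨h1, h2⟩ := abs_lt.1 h
  have ha : 0 < Δθ + μ := by linarith
  have hb : 0 < μ - Δθ := by linarith
  have e1 : Si (c * (Δθ - μ)) = - Si (c * (μ - Δθ)) := by
    rw [show c * (Δθ - μ) = -(c * (μ - Δθ)) by ring, Si_neg]
  have t1 := Si_tail (mul_pos hcpos ha)
  have t2 := Si_tail (mul_pos hcpos hb)
  have key : (2 / Real.pi) * (Si (c * (Δθ + μ)) - Si (c * (Δθ - μ))) - 2
      = (2 / Real.pi) * ((Si (c * (Δθ + μ)) - Real.pi/2) + (Si (c * (μ - Δθ)) - Real.pi/2)) := by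
    rw [e1]
    field_simp
    ring
  rw [key, abs_mul, abs_of_pos (by positivity : (0:ℝ) < 2 / Real.pi)]
  calc (2 / Real.pi) * |(Si (c * (Δθ + μ)) - Real.pi/2) + (Si (c * (μ - Δθ)) - Real.pi/2)|
      ≤ (2 / Real.pi) * (2 / (c * (Δθ + μ)) + 2 / (c * (μ - Δθ))) := by
        refine mul_le_mul_of_nonneg_left ?_ (by positivity)
        exact (abs_add_le _ _).trans (add_le_add t1 t2)
    _ = (8 / ((N : ℝ) * Real.pi ^ 2)) * (1 / (μ + Δθ) + 1 / (μ - Δθ)) := by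
        rw [hc]
        have hne1 : Δθ + μ ≠ 0 := ne_of_gt ha
        have hne2 : μ + Δθ ≠ 0 := by intro hz; apply hne1; linarith
        have hne3 : μ - Δθ ≠ 0 := ne_of_gt hb
        have hne4 : Real.pi ≠ 0 := ne_of_gt hπ
        have hne5 : (N:ℝ) ≠ 0 := ne_of_gt hN'
        field_simp
        ring
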